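/- arXiv:1010.5287 — 2 statements merged into one kernel-verified Lean document; each statement's English description precedes it below -/
import Mathlib

section
/- Fix nonnegative integers m, n. The total number of admissible sequences (s_k)_{−m ≤ k ≤ n} with center 0 equals the binomial coefficient C(m+n, m). In particular this set is finite. -/
/-- `s` (viewed on the index range `[-m, n]`) is an admissible sequence with center `0`:
positive entries, nondecreasing with steps `0` or `1` before `0`, nonincreasing with
steps `0` or `1` from `0` on, and first and last terms at most `1`. -/
def IsAdmissibleCenter0 (m n : ℕ) (s : ℤ → ℤ) : Prop :=
  (∀ k, -(m : ℤ) ≤ k → k ≤ (n : ℤ) → 0 < s k) ∧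
  (∀ i, -(m : ℤ) ≤ i → i < 0 → s i ≤ s (i + 1) ∧ s (i + 1) ≤ s i + 1) ∧
  (∀ i, 0 ≤ i → i < (n : ℤ) → s (i + 1) ≤ s i ∧ s i - 1 ≤ s (i + 1)) ∧
  s (-(m : ℤ)) ≤ 1 ∧ s (n : ℤ) ≤ 1

/-- Normalization: `s` vanishes outside the index range `[-m, n]`. -/
def NormalizedSeq (m n : ℕ) (s : ℤ → ℤ) : Prop :=
  ∀ k, k < -(m : ℤ) ∨ (n : ℤ) < k → s k = 0

namespace Stmt6Aux

/-- left-step size at position `j` (0 if `inl j ∈ C` i.e. flat, else 1). -/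
def lstep (m n : ℕ) (C : Finset (Fin m ⊕ Fin n)) (j : ℕ) : ℤ :=
  if h : j < m then (if Sum.inl (⟨j, h⟩ : Fin m) ∈ C then 0 else 1) else 0

/-- right-step size at position `j` (1 if `inr j ∈ C` i.e. decrease, else 0). -/
def rstep (m n : ℕ) (C : Finset (Fin m ⊕ Fin n)) (j : ℕ) : ℤ :=
  if h : j < n then (if Sum.inr (⟨j, h⟩ : Fin n) ∈ C then 1 else 0) else 0

lemma lstep_nonneg (m n : ℕ) (C : Finset (Fin m ⊕ Fin n)) (j : ℕ) : 0 ≤ lstep m n C j := by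
  unfold lstep; split_ifs <;> norm_num

lemma lstep_le_one (m n : ℕ) (C : Finset (Fin m ⊕ Fin n)) (j : ℕ) : lstep m n C j ≤ 1 := by
  unfold lstep; split_ifs <;> norm_num

lemma rstep_nonneg (m n : ℕ) (C : Finset (Fin m ⊕ Fin n)) (j : ℕ) : 0 ≤ rstep m n C j := by
  unfold rstep; split_ifs <;> norm_num

lemma rstep_le_one (m n : ℕ) (C : Finset (Fin m ⊕ Fin n)) (j : ℕ) : rstep m n C j ≤ 1 := by
  unfold rstep; split_ifs <;> norm_num

/-- the sequence associated to a set of steps. -/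
def toSeq (m n : ℕ) (C : Finset (Fin m ⊕ Fin n)) : ℤ → ℤ := fun k =>
  if k < -(m : ℤ) ∨ (n : ℤ) < k then 0
  else if k ≤ 0 then 1 + ∑ j ∈ Finset.range (k + m).toNat, lstep m n C j
  else 1 + ∑ j ∈ Finset.Ico k.toNat n, rstep m n C j

/-- balance: if `C.card = m` then total left steps = total right steps. -/
lemma balance (m n : ℕ) (C : Finset (Fin m ⊕ Fin n)) (hC : C.card = m) :
    ∑ j ∈ Finset.range m, lstep m n C j = ∑ j ∈ Finset.range n, rstep m n C j := by
  have hl : ∑ j ∈ Finset.range m, lstep m n C j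
      = ∑ i : Fin m, (if Sum.inl i ∈ C then (0:ℤ) else 1) := by
    rw [← Fin.sum_univ_eq_sum_range]
    refine Finset.sum_congr rfl fun i _ => ?_
    simp [lstep, i.isLt]
  have hr : ∑ j ∈ Finset.range n, rstep m n C j
      = ∑ i : Fin n, (if Sum.inr i ∈ C then (1:ℤ) else 0) := by
    rw [← Fin.sum_univ_eq_sum_range]
    refine Finset.sum_congr rfl fun i _ => ?_
    simp [rstep, i.isLt]
  have hcard : (∑ i : Fin m, (if Sum.inl i ∈ C then (1:ℤ) else 0))
      + ∑ i : Fin n, (if Sum.inr i ∈ C then (1:ℤ) else 0) = (m : ℤ) := by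
    rw [← Fintype.sum_sum_type (fun x => if x ∈ C then (1:ℤ) else 0)]
    rw [Finset.sum_boole]
    simp [Finset.filter_mem_eq_inter, hC]
  have hflip : ∑ i : Fin m, (if Sum.inl i ∈ C then (0:ℤ) else 1)
      = (m : ℤ) - ∑ i : Fin m, (if Sum.inl i ∈ C then (1:ℤ) else 0) := by
    rw [eq_sub_iff_add_eq, ← Finset.sum_add_distrib]
    have : ∀ i : Fin m, ((if Sum.inl i ∈ C then (0:ℤ) else 1)
        + if Sum.inl i ∈ C then (1:ℤ) else 0) = 1 := by
      intro i; split_ifs <;> ring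
    simp [this]
  rw [hl, hr, hflip]
  linarith

lemma toSeq_bot (m n : ℕ) (C : Finset (Fin m ⊕ Fin n)) : toSeq m n C (-(m : ℤ)) = 1 := by
  have h1 : ¬ ((-(m:ℤ) < -(m:ℤ)) ∨ (n:ℤ) < -(m:ℤ)) := by omega
  have h2 : (-(m:ℤ) + m).toNat = 0 := by omega
  have h3 : -(m:ℤ) ≤ (n:ℤ) := by omega
  simp [toSeq, h1, h2, h3, show -(m:ℤ) ≤ 0 by omega]

lemma left_step (m n : ℕ) (C : Finset (Fin m ⊕ Fin n)) (i : ℤ)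
    (h1 : -(m : ℤ) ≤ i) (h2 : i < 0) :
    toSeq m n C (i + 1) = toSeq m n C i + lstep m n C (i + m).toNat := by
  have ha : ¬ ((i < -(m:ℤ)) ∨ (n:ℤ) < i) := by omega
  have hb : ¬ ((i + 1 < -(m:ℤ)) ∨ (n:ℤ) < i + 1) := by omega
  have hi1 : i + 1 ≤ 0 := by omega
  have ht : ((i + 1) + m).toNat = (i + m).toNat + 1 := by omega
  simp only [toSeq, if_neg ha, if_neg hb, if_pos hi1, if_pos (show i ≤ 0 by omega), ht,
    Finset.sum_range_succ]
  ring

lemma toSeq_zero (m n : ℕ) (C : Finset (Fin m ⊕ Fin n)) (hC : C.card = m) :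
    toSeq m n C 0 = 1 + ∑ j ∈ Finset.Ico 0 n, rstep m n C j := by
  have h1 : ¬ (((0:ℤ) < -(m:ℤ)) ∨ (n:ℤ) < 0) := by omega
  have h2 : ((0:ℤ) + m).toNat = m := by omega
  simp only [toSeq, if_neg h1, if_pos (le_refl (0:ℤ)), h2]
  rw [balance m n C hC, Finset.range_eq_Ico]

lemma right_step (m n : ℕ) (C : Finset (Fin m ⊕ Fin n)) (hC : C.card = m) (i : ℤ)
    (h1 : 0 ≤ i) (h2 : i < (n : ℤ)) :
    toSeq m n C i = toSeq m n C (i + 1) + rstep m n C i.toNat := by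
  have hb : ¬ ((i + 1 < -(m:ℤ)) ∨ (n:ℤ) < i + 1) := by omega
  have hi1 : ¬ (i + 1 ≤ 0) := by omega
  have hlt : i.toNat < n := by omega
  have ht1 : (i + 1).toNat = i.toNat + 1 := by omega
  have hrhs : toSeq m n C (i + 1) = 1 + ∑ j ∈ Finset.Ico (i.toNat + 1) n, rstep m n C j := by
    simp only [toSeq, if_neg hb, if_neg hi1, ht1]
  rcases eq_or_lt_of_le h1 with h0 | h0
  · subst h0
    rw [toSeq_zero m n C hC, hrhs, Int.toNat_zero,
      Finset.sum_eq_sum_Ico_succ_bot (show 0 < n by omega) (rstep m n C)]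
    ring
  · have ha : ¬ ((i < -(m:ℤ)) ∨ (n:ℤ) < i) := by omega
    have hi0 : ¬ (i ≤ 0) := by omega
    simp only [toSeq, if_neg ha, if_neg hi0, hrhs]
    rw [Finset.sum_eq_sum_Ico_succ_bot hlt (rstep m n C)]
    simp only [toSeq, if_neg hb, if_neg hi1, ht1]
    ring

lemma toSeq_top (m n : ℕ) (C : Finset (Fin m ⊕ Fin n)) (hC : C.card = m) :
    toSeq m n C (n : ℤ) = 1 := by
  rcases Nat.eq_zero_or_pos n with h | h
  · subst h
    simpa using toSeq_zero m 0 C hC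
  · have ha : ¬ (((n:ℤ) < -(m:ℤ)) ∨ (n:ℤ) < (n:ℤ)) := by omega
    have hb : ¬ ((n:ℤ) ≤ 0) := by omega
    have hn : ((n:ℤ)).toNat = n := by omega
    simp only [toSeq, if_neg ha, if_neg hb, hn, Finset.Ico_self, Finset.sum_empty, add_zero]

/-- membership: `toSeq` of an `m`-subset is a normalized admissible sequence. -/
lemma toSeq_mem (m n : ℕ) (C : Finset (Fin m ⊕ Fin n)) (hC : C.card = m) :
    NormalizedSeq m n (toSeq m n C) ∧ IsAdmissibleCenter0 m n (toSeq m n C) := by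
  constructor
  · intro k hk
    simp [toSeq, hk]
  refine ⟨?_, ?_, ?_, ?_, ?_⟩
  · intro k hk1 hk2
    have ha : ¬ ((k < -(m:ℤ)) ∨ (n:ℤ) < k) := by omega
    by_cases hk0 : k ≤ 0
    · have : 0 ≤ ∑ j ∈ Finset.range (k + m).toNat, lstep m n C j :=
        Finset.sum_nonneg fun j _ => lstep_nonneg m n C j
      simp only [toSeq, if_neg ha, if_pos hk0]
      linarith
    · have : 0 ≤ ∑ j ∈ Finset.Ico k.toNat n, rstep m n C j :=
        Finset.sum_nonneg fun j _ => rstep_nonneg m n C j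
      simp only [toSeq, if_neg ha, if_neg hk0]
      linarith
  · intro i hi1 hi2
    have := left_step m n C i hi1 hi2
    have h0 := lstep_nonneg m n C (i + m).toNat
    have h1 := lstep_le_one m n C (i + m).toNat
    constructor <;> linarith
  · intro i hi1 hi2
    have := right_step m n C hC i hi1 hi2
    have h0 := rstep_nonneg m n C i.toNat
    have h1 := rstep_le_one m n C i.toNat
    constructor <;> linarith
  · rw [toSeq_bot]
  · rw [toSeq_top m n C hC]

lemma toSeq_injOn (m n : ℕ) :
    Set.InjOn (toSeq m n) {C : Finset (Fin m ⊕ Fin n) | C.card = m} := by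
  intro C hC C' hC' hEq
  simp only [Set.mem_setOf_eq] at hC hC'
  ext x
  cases x with
  | inl j =>
    have hi1 : -(m:ℤ) ≤ -(m:ℤ) + j := by omega
    have hi2 : -(m:ℤ) + (j:ℤ) < 0 := by have := j.isLt; omega
    have e1 := left_step m n C (-(m:ℤ) + j) hi1 hi2
    have e2 := left_step m n C' (-(m:ℤ) + j) hi1 hi2
    rw [hEq] at e1
    have heq : lstep m n C ((-(m:ℤ) + j + m).toNat) = lstep m n C' ((-(m:ℤ) + j + m).toNat) := by
      linarith
    have ht : ((-(m:ℤ) + j + m).toNat) = (j : ℕ) := by omega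
    rw [ht] at heq
    simp only [lstep, dif_pos j.isLt, Fin.eta] at heq
    by_cases h1 : Sum.inl j ∈ C <;> by_cases h2 : Sum.inl j ∈ C' <;>
      simp [h1, h2] at heq ⊢
  | inr j =>
    have hi1 : (0:ℤ) ≤ (j:ℤ) := by omega
    have hi2 : ((j:ℤ)) < (n:ℤ) := by exact_mod_cast j.isLt
    have e1 := right_step m n C hC (j:ℤ) hi1 hi2
    have e2 := right_step m n C' hC' (j:ℤ) hi1 hi2
    rw [hEq] at e1
    have heq : rstep m n C ((j:ℤ)).toNat = rstep m n C' ((j:ℤ)).toNat := by linarith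
    have ht : ((j:ℤ)).toNat = (j : ℕ) := by omega
    rw [ht] at heq
    simp only [rstep, dif_pos j.isLt, Fin.eta] at heq
    by_cases h1 : Sum.inr j ∈ C <;> by_cases h2 : Sum.inr j ∈ C' <;>
      simp [h1, h2] at heq ⊢

/-- telescoping over Ico. -/
lemma sum_Ico_sub' (g : ℕ → ℤ) (a b : ℕ) (hab : a ≤ b) :
    ∑ j ∈ Finset.Ico a b, (g j - g (j + 1)) = g a - g b := by
  rw [Finset.sum_Ico_eq_sum_range]
  have := Finset.sum_range_sub' (fun j => g (a + j)) (b - a)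
  calc ∑ k ∈ Finset.range (b - a), (g (a + k) - g (a + k + 1))
      = ∑ k ∈ Finset.range (b - a), ((fun j => g (a + j)) k - (fun j => g (a + j)) (k + 1)) := by
        refine Finset.sum_congr rfl fun k _ => ?_
        simp [Nat.add_assoc]
    _ = g (a + 0) - g (a + (b - a)) := this
    _ = g a - g b := by rw [Nat.add_zero, Nat.add_sub_cancel' hab]

lemma toSeq_surjOn (m n : ℕ) (s : ℤ → ℤ)
    (hN : NormalizedSeq m n s) (hA : IsAdmissibleCenter0 m n s) :
    ∃ C : Finset (Fin m ⊕ Fin n), C.card = m ∧ toSeq m n C = s := by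
  classical
  obtain ⟨hpos, hL, hR, hsm, hsn⟩ := hA
  have hsm1 : s (-(m:ℤ)) = 1 := by
    have := hpos (-(m:ℤ)) le_rfl (by omega); omega
  have hsn1 : s (n:ℤ) = 1 := by
    have := hpos (n:ℤ) (by omega) le_rfl; omega
  set P : Fin m ⊕ Fin n → Prop :=
    Sum.elim (fun j : Fin m => s (-(m:ℤ) + j + 1) = s (-(m:ℤ) + j))
      (fun j : Fin n => s ((j:ℤ) + 1) = s (j:ℤ) - 1) with hP
  set C : Finset (Fin m ⊕ Fin n) := Finset.univ.filter P with hCdef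
  have hmemL : ∀ j : Fin m, (Sum.inl j ∈ C ↔ s (-(m:ℤ) + j + 1) = s (-(m:ℤ) + j)) := by
    intro j; simp [hCdef, hP]
  have hmemR : ∀ j : Fin n, (Sum.inr j ∈ C ↔ s ((j:ℤ) + 1) = s (j:ℤ) - 1) := by
    intro j; simp [hCdef, hP]
  -- step identities
  have hlid : ∀ j : ℕ, j < m → lstep m n C j = s (-(m:ℤ) + j + 1) - s (-(m:ℤ) + j) := by
    intro j hj
    have hi1 : -(m:ℤ) ≤ -(m:ℤ) + j := by omega
    have hi2 : -(m:ℤ) + (j:ℤ) < 0 := by omega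
    obtain ⟨ha, hb⟩ := hL (-(m:ℤ) + j) hi1 hi2
    simp only [lstep, dif_pos hj]
    rw [show ((⟨j, hj⟩ : Fin m) : ℤ) = (j : ℤ) from rfl] at *
    by_cases hc : Sum.inl (⟨j, hj⟩ : Fin m) ∈ C
    · rw [if_pos hc]
      have := (hmemL ⟨j, hj⟩).mp hc
      simp only [show ((⟨j, hj⟩ : Fin m) : ℤ) = (j : ℤ) from rfl] at this
      omega
    · rw [if_neg hc]
      have := (hmemL ⟨j, hj⟩).not.mp hc
      simp only [show ((⟨j, hj⟩ : Fin m) : ℤ) = (j : ℤ) from rfl] at this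
      omega
  have hrid : ∀ j : ℕ, j < n → rstep m n C j = s (j:ℤ) - s ((j:ℤ) + 1) := by
    intro j hj
    have hi1 : (0:ℤ) ≤ (j:ℤ) := by omega
    have hi2 : ((j:ℤ)) < (n:ℤ) := by omega
    obtain ⟨ha, hb⟩ := hR (j:ℤ) hi1 hi2
    simp only [rstep, dif_pos hj]
    by_cases hc : Sum.inr (⟨j, hj⟩ : Fin n) ∈ C
    · rw [if_pos hc]
      have := (hmemR ⟨j, hj⟩).mp hc
      simp only [show ((⟨j, hj⟩ : Fin n) : ℤ) = (j : ℤ) from rfl] at this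
      omega
    · rw [if_neg hc]
      have := (hmemR ⟨j, hj⟩).not.mp hc
      simp only [show ((⟨j, hj⟩ : Fin n) : ℤ) = (j : ℤ) from rfl] at this
      omega
  -- telescoping sums
  have hlsum : ∀ t : ℕ, t ≤ m →
      ∑ j ∈ Finset.range t, lstep m n C j = s (-(m:ℤ) + t) - 1 := by
    intro t ht
    have : ∑ j ∈ Finset.range t, lstep m n C j
        = ∑ j ∈ Finset.range t, ((fun u : ℕ => s (-(m:ℤ) + u)) (j + 1)
            - (fun u : ℕ => s (-(m:ℤ) + u)) j) := by
      refine Finset.sum_congr rfl fun j hj => ?_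
      have hj' : j < m := lt_of_lt_of_le (Finset.mem_range.mp hj) ht
      rw [hlid j hj']
      push_cast
      ring_nf
    rw [this, Finset.sum_range_sub (fun u : ℕ => s (-(m:ℤ) + u)) t]
    simp [hsm1]
  have hrsum : ∀ t : ℕ, t ≤ n →
      ∑ j ∈ Finset.Ico t n, rstep m n C j = s (t:ℤ) - 1 := by
    intro t ht
    have : ∑ j ∈ Finset.Ico t n, rstep m n C j
        = ∑ j ∈ Finset.Ico t n, ((fun u : ℕ => s (u:ℤ)) j - (fun u : ℕ => s (u:ℤ)) (j + 1)) := by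
      refine Finset.sum_congr rfl fun j hj => ?_
      have hj' : j < n := (Finset.mem_Ico.mp hj).2
      rw [hrid j hj']
      push_cast
      ring_nf
    rw [this, sum_Ico_sub' (fun u : ℕ => s (u:ℤ)) t n ht]
    simp [hsn1]
  -- cardinality
  have hcard : C.card = m := by
    have h1 : (C.card : ℤ) = ∑ x : Fin m ⊕ Fin n, (if x ∈ C then (1:ℤ) else 0) := by
      rw [Finset.sum_boole]
      simp [Finset.filter_mem_eq_inter]
    rw [Fintype.sum_sum_type] at h1
    have h2 : ∑ i : Fin m, (if Sum.inl i ∈ C then (1:ℤ) else 0)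
        = (m : ℤ) - ∑ j ∈ Finset.range m, lstep m n C j := by
      rw [eq_sub_iff_add_eq]
      have hls : ∑ j ∈ Finset.range m, lstep m n C j
          = ∑ i : Fin m, (if Sum.inl i ∈ C then (0:ℤ) else 1) := by
        rw [← Fin.sum_univ_eq_sum_range]
        refine Finset.sum_congr rfl fun i _ => ?_
        simp [lstep, i.isLt]
      rw [hls, ← Finset.sum_add_distrib]
      have : ∀ i : Fin m, ((if Sum.inl i ∈ C then (1:ℤ) else 0)
          + if Sum.inl i ∈ C then (0:ℤ) else 1) = 1 := by
        intro i; split_ifs <;> ring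
      simp [this]
    have h3 : ∑ i : Fin n, (if Sum.inr i ∈ C then (1:ℤ) else 0)
        = ∑ j ∈ Finset.range n, rstep m n C j := by
      rw [← Fin.sum_univ_eq_sum_range]
      refine Finset.sum_congr rfl fun i _ => ?_
      simp [rstep, i.isLt]
    have h4 := hlsum m le_rfl
    rw [show -(m:ℤ) + (m:ℤ) = 0 by ring] at h4
    have h5 := hrsum 0 (Nat.zero_le n)
    rw [← Finset.range_eq_Ico] at h5
    simp only [Nat.cast_zero] at h5
    have : (C.card : ℤ) = (m : ℤ) := by rw [h1, h2, h3, h4, h5]; ring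
    exact_mod_cast this
  refine ⟨C, hcard, funext fun k => ?_⟩
  by_cases hk : k < -(m:ℤ) ∨ (n:ℤ) < k
  · rw [hN k hk]
    simp [toSeq, hk]
  · by_cases hk0 : k ≤ 0
    · have ht : -(m:ℤ) + (((k + m).toNat : ℕ) : ℤ) = k := by omega
      simp only [toSeq, if_neg hk, if_pos hk0]
      rw [hlsum (k + m).toNat (by omega), ht]
      ring
    · have hkn : k.toNat ≤ n := by omega
      simp only [toSeq, if_neg hk, if_neg hk0]
      rw [hrsum k.toNat hkn, show ((k.toNat : ℕ) : ℤ) = k by omega]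
      ring

end Stmt6Aux

theorem stmt6 (m n : ℕ) :
    {s : ℤ → ℤ | NormalizedSeq m n s ∧ IsAdmissibleCenter0 m n s}.Finite ∧
    Set.ncard {s : ℤ → ℤ | NormalizedSeq m n s ∧ IsAdmissibleCenter0 m n s}
      = Nat.choose (m + n) m := by
  classical
  have himg : {s : ℤ → ℤ | NormalizedSeq m n s ∧ IsAdmissibleCenter0 m n s}
      = Stmt6Aux.toSeq m n '' {C : Finset (Fin m ⊕ Fin n) | C.card = m} := by
    ext s
    constructor
    · rintro ⟨h1, h2⟩
      obtain ⟨C, hc, he⟩ := Stmt6Aux.toSeq_surjOn m n s h1 h2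
      exact ⟨C, hc, he⟩
    · rintro ⟨C, hc, rfl⟩
      exact Stmt6Aux.toSeq_mem m n C hc
  have hfin : {C : Finset (Fin m ⊕ Fin n) | C.card = m}.Finite := Set.toFinite _
  constructor
  · rw [himg]
    exact hfin.image _
  · rw [himg, Set.ncard_image_of_injOn (Stmt6Aux.toSeq_injOn m n)]
    have hset : {C : Finset (Fin m ⊕ Fin n) | C.card = m}
        = ↑(Finset.univ.filter fun C : Finset (Fin m ⊕ Fin n) => C.card = m) := by
      ext C; simp
    rw [hset, Set.ncard_coe_finset, ← Fintype.card_subtype, Fintype.card_finset_len]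
    simp [Fintype.card_sum]
end

section
/- Let q₁, q₂ be nonzero complex numbers with q₂ ≠ 1, and let W(z₁,z₂) = z₁ + z₂ + q₁²q₂/(z₁z₂²) + (1+q₂)q₁/z₂ for (z₁,z₂) ∈ (ℂ*)². Then the system z₁∂W/∂z₁ = 0, z₂∂W/∂z₂ = 0 has exactly 4 solutions in (ℂ*)². -/
private lemma deriv1 (c k C z : ℂ) (hz : z ≠ 0) :
    deriv (fun w : ℂ => w + c + C / w + k) z = 1 - C / z ^ 2 := by
  have h : HasDerivAt (fun w : ℂ => w + c + C / w + k) (1 - C / z ^ 2) z := by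
    have := ((hasDerivAt_id z).add_const c).add (((hasDerivAt_inv hz).const_mul C))
    simpa [div_eq_mul_inv, sub_eq_add_neg, mul_comm, mul_assoc, mul_left_comm] using this.add_const k
  exact h.deriv

private lemma deriv2 (c D E z : ℂ) (hz : z ≠ 0) :
    deriv (fun w : ℂ => c + w + D / w ^ 2 + E / w) z = 1 - 2 * D / z ^ 3 - E / z ^ 2 := by
  have h2 : HasDerivAt (fun w : ℂ => D / w ^ 2) (-(2 * D / z ^ 3)) z := by
    have := (hasDerivAt_zpow (-2) z (Or.inl hz)).const_mul D
    have e1 : (fun w : ℂ => D * w ^ (-2 : ℤ)) = fun w : ℂ => D / w ^ 2 := by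
      funext w
      rw [zpow_neg, div_eq_mul_inv]
      norm_num
    rw [e1] at this
    convert this using 1
    show _ = D * ((-2 : ℤ) * z ^ (-2 - 1 : ℤ))
    rw [show (-2 - 1 : ℤ) = -3 by norm_num, zpow_neg,
      show (z : ℂ) ^ (3 : ℤ) = z ^ 3 by norm_cast]
    push_cast
    field_simp
    all_goals rfl
  have h3 : HasDerivAt (fun w : ℂ => E / w) (-(E / z ^ 2)) z := by
    have := (hasDerivAt_inv hz).const_mul E
    simpa [div_eq_mul_inv, mul_comm] using this
  have h := (((hasDerivAt_id z).const_add c).add h2).add h3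
  have := h.deriv
  simp only [id] at this
  erw [this]
  ring

/-- The critical-point equations of `W = z₁ + z₂ + q₁²q₂/(z₁z₂²) + (1+q₂)q₁/z₂`
have exactly `4` solutions in `(ℂ*)²` when `q₁, q₂ ≠ 0` and `q₂ ≠ 1`. -/
theorem stmt15 (q₁ q₂ : ℂ) (hq₁ : q₁ ≠ 0) (hq₂ : q₂ ≠ 0) (hq₂' : q₂ ≠ 1) :
    Set.ncard {p : ℂ × ℂ | p.1 ≠ 0 ∧ p.2 ≠ 0 ∧
        p.1 * deriv (fun z : ℂ =>
          z + p.2 + q₁ ^ 2 * q₂ / (z * p.2 ^ 2) + (1 + q₂) * q₁ / p.2) p.1 = 0 ∧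
        p.2 * deriv (fun z : ℂ =>
          p.1 + z + q₁ ^ 2 * q₂ / (p.1 * z ^ 2) + (1 + q₂) * q₁ / z) p.2 = 0}
      = 4 := by
  obtain ⟨a, ha⟩ := IsAlgClosed.exists_pow_nat_eq q₁ (n := 2) (by norm_num)
  obtain ⟨b, hb⟩ := IsAlgClosed.exists_pow_nat_eq q₂ (n := 2) (by norm_num)
  subst ha hb
  have ha0 : a ≠ 0 := fun h => hq₁ (by simp [h])
  have hb0 : b ≠ 0 := fun h => hq₂ (by simp [h])
  have hbp : 1 + b ≠ 0 := fun h => hq₂' (by linear_combination (b - 1) * h)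
  have hbm : 1 - b ≠ 0 := fun h => hq₂' (by linear_combination (-(1 + b)) * h)
  have hchar : ∀ z₁ z₂ : ℂ, z₁ ≠ 0 → z₂ ≠ 0 →
      ((z₁ * deriv (fun z : ℂ =>
          z + z₂ + (a ^ 2) ^ 2 * b ^ 2 / (z * z₂ ^ 2) + (1 + b ^ 2) * a ^ 2 / z₂) z₁ = 0 ∧
        z₂ * deriv (fun z : ℂ =>
          z₁ + z + (a ^ 2) ^ 2 * b ^ 2 / (z₁ * z ^ 2) + (1 + b ^ 2) * a ^ 2 / z) z₂ = 0) ↔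
       (z₁ ^ 2 * z₂ ^ 2 = (a ^ 2) ^ 2 * b ^ 2 ∧
        z₁ * z₂ ^ 3 = 2 * ((a ^ 2) ^ 2 * b ^ 2) + (1 + b ^ 2) * a ^ 2 * (z₁ * z₂))) := by
    intro z₁ z₂ h1 h2
    have e1 : (fun z : ℂ => z + z₂ + (a ^ 2) ^ 2 * b ^ 2 / (z * z₂ ^ 2) + (1 + b ^ 2) * a ^ 2 / z₂)
        = fun w : ℂ => w + z₂ + ((a ^ 2) ^ 2 * b ^ 2 / z₂ ^ 2) / w + (1 + b ^ 2) * a ^ 2 / z₂ := by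
      funext w
      rw [div_div, mul_comm (z₂ ^ 2)]
    have e2 : (fun z : ℂ => z₁ + z + (a ^ 2) ^ 2 * b ^ 2 / (z₁ * z ^ 2) + (1 + b ^ 2) * a ^ 2 / z)
        = fun w : ℂ => z₁ + w + ((a ^ 2) ^ 2 * b ^ 2 / z₁) / w ^ 2 + ((1 + b ^ 2) * a ^ 2) / w := by
      funext w
      rw [div_div]
    rw [e1, e2, deriv1 _ _ _ _ h1, deriv2 _ _ _ _ h2]
    constructor
    · rintro ⟨g1, g2⟩
      field_simp at g1 g2
      have k1 : z₁ ^ 2 * z₂ ^ 2 - a ^ 4 * b ^ 2 = 0 := by linear_combination g1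
      have k2 : z₂ ^ 2 * (z₁ * z₂ ^ 3 - a ^ 4 * b ^ 2 * 2 - z₁ * a ^ 2 * z₂ * (1 + b ^ 2)) = 0 := by
        linear_combination z₂ ^ 2 * g2
      refine ⟨by linear_combination k1, ?_⟩
      have k3 : z₂ ^ 2 * (z₁ * z₂ ^ 3 -
          (2 * ((a ^ 2) ^ 2 * b ^ 2) + (1 + b ^ 2) * a ^ 2 * (z₁ * z₂))) = 0 := by
        linear_combination k2
      have k4 := (mul_eq_zero.mp k3).resolve_left (pow_ne_zero 2 h2)
      linear_combination k4
    · rintro ⟨g1, g2⟩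
      constructor
      · field_simp
        linear_combination g1
      · field_simp
        linear_combination g2
  have key : {p : ℂ × ℂ | p.1 ≠ 0 ∧ p.2 ≠ 0 ∧
        p.1 * deriv (fun z : ℂ =>
          z + p.2 + (a ^ 2) ^ 2 * b ^ 2 / (z * p.2 ^ 2) + (1 + b ^ 2) * a ^ 2 / p.2) p.1 = 0 ∧
        p.2 * deriv (fun z : ℂ =>
          p.1 + z + (a ^ 2) ^ 2 * b ^ 2 / (p.1 * z ^ 2) + (1 + b ^ 2) * a ^ 2 / z) p.2 = 0}
      = {(a * b / (1 + b), a * (1 + b)), (-(a * b / (1 + b)), -(a * (1 + b))),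
         (-(a * b / (1 - b)), a * (1 - b)), (a * b / (1 - b), -(a * (1 - b)))} := by
    ext ⟨z₁, z₂⟩
    simp only [Set.mem_setOf_eq, Set.mem_insert_iff, Set.mem_singleton_iff, Prod.mk.injEq]
    constructor
    · rintro ⟨h1, h2, h3, h4⟩
      obtain ⟨E1, E2⟩ := (hchar z₁ z₂ h1 h2).mp ⟨h3, h4⟩
      have f1 : (z₁ * z₂ - a ^ 2 * b) * (z₁ * z₂ + a ^ 2 * b) = 0 := by
        linear_combination E1
      rcases mul_eq_zero.mp f1 with hu | hu
      · have hu' : z₁ * z₂ = a ^ 2 * b := sub_eq_zero.mp hu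
        have f2 : a ^ 2 * b * ((z₂ - a * (1 + b)) * (z₂ + a * (1 + b))) = 0 := by
          linear_combination E2 + ((1 + b ^ 2) * a ^ 2 - z₂ ^ 2) * hu'
        have f2' := (mul_eq_zero.mp f2).resolve_left
          (mul_ne_zero (pow_ne_zero 2 ha0) hb0)
        rcases mul_eq_zero.mp f2' with h | h
        · have hz2 : z₂ = a * (1 + b) := sub_eq_zero.mp h
          have hc : a * (z₁ * (1 + b) - a * b) = 0 := by linear_combination hu' - z₁ * h
          have hc' := sub_eq_zero.mp ((mul_eq_zero.mp hc).resolve_left ha0)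
          exact Or.inl ⟨(eq_div_iff hbp).mpr hc', hz2⟩
        · have hz2 : z₂ = -(a * (1 + b)) := by linear_combination h
          have hc : a * (z₁ * (1 + b) + a * b) = 0 := by linear_combination z₁ * h - hu'
          have hc'' : z₁ * (1 + b) = -(a * b) := by
            linear_combination (mul_eq_zero.mp hc).resolve_left ha0
          have : z₁ = -(a * b) / (1 + b) := (eq_div_iff hbp).mpr hc''
          rw [neg_div] at this
          exact Or.inr (Or.inl ⟨this, hz2⟩)
      · have f2 : a ^ 2 * b * ((z₂ - a * (1 - b)) * (z₂ + a * (1 - b))) = 0 := by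
          linear_combination -E2 + (z₂ ^ 2 - (1 + b ^ 2) * a ^ 2) * hu
        have f2' := (mul_eq_zero.mp f2).resolve_left
          (mul_ne_zero (pow_ne_zero 2 ha0) hb0)
        rcases mul_eq_zero.mp f2' with h | h
        · have hz2 : z₂ = a * (1 - b) := sub_eq_zero.mp h
          have hc : a * (z₁ * (1 - b) + a * b) = 0 := by linear_combination hu - z₁ * h
          have hc'' : z₁ * (1 - b) = -(a * b) := by
            linear_combination (mul_eq_zero.mp hc).resolve_left ha0
          have : z₁ = -(a * b) / (1 - b) := (eq_div_iff hbm).mpr hc''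
          rw [neg_div] at this
          exact Or.inr (Or.inr (Or.inl ⟨this, hz2⟩))
        · have hz2 : z₂ = -(a * (1 - b)) := by linear_combination h
          have hc : a * (z₁ * (1 - b) - a * b) = 0 := by linear_combination z₁ * h - hu
          have hc' := sub_eq_zero.mp ((mul_eq_zero.mp hc).resolve_left ha0)
          exact Or.inr (Or.inr (Or.inr ⟨(eq_div_iff hbm).mpr hc', hz2⟩))
    · have nz1 : a * b / (1 + b) ≠ 0 := div_ne_zero (mul_ne_zero ha0 hb0) hbp
      have nz2 : a * (1 + b) ≠ 0 := mul_ne_zero ha0 hbp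
      have nz3 : a * b / (1 - b) ≠ 0 := div_ne_zero (mul_ne_zero ha0 hb0) hbm
      have nz4 : a * (1 - b) ≠ 0 := mul_ne_zero ha0 hbm
      rintro (⟨rfl, rfl⟩ | ⟨rfl, rfl⟩ | ⟨rfl, rfl⟩ | ⟨rfl, rfl⟩)
      · refine ⟨nz1, nz2, (hchar _ _ nz1 nz2).mpr ⟨?_, ?_⟩⟩ <;> field_simp <;> ring
      · refine ⟨neg_ne_zero.mpr nz1, neg_ne_zero.mpr nz2,
          (hchar _ _ (neg_ne_zero.mpr nz1) (neg_ne_zero.mpr nz2)).mpr ⟨?_, ?_⟩⟩ <;>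
          field_simp <;> ring
      · refine ⟨neg_ne_zero.mpr nz3, nz4,
          (hchar _ _ (neg_ne_zero.mpr nz3) nz4).mpr ⟨?_, ?_⟩⟩ <;> field_simp <;> ring
      · refine ⟨nz3, neg_ne_zero.mpr nz4,
          (hchar _ _ nz3 (neg_ne_zero.mpr nz4)).mpr ⟨?_, ?_⟩⟩ <;> field_simp <;> ring
  rw [key]
  have n12 : a * (1 + b) ≠ -(a * (1 + b)) := fun h =>
    mul_ne_zero ha0 hbp (by linear_combination h / 2)
  have n13 : a * (1 + b) ≠ a * (1 - b) := fun h =>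
    mul_ne_zero ha0 hb0 (by linear_combination h / 2)
  have n14 : a * (1 + b) ≠ -(a * (1 - b)) := fun h => ha0 (by linear_combination h / 2)
  have n23 : -(a * (1 + b)) ≠ a * (1 - b) := fun h => ha0 (by linear_combination -h / 2)
  have n24 : -(a * (1 + b)) ≠ -(a * (1 - b)) := fun h =>
    mul_ne_zero ha0 hb0 (by linear_combination -h / 2)
  have n34 : a * (1 - b) ≠ -(a * (1 - b)) := fun h =>
    mul_ne_zero ha0 hbm (by linear_combination h / 2)
  rw [Set.ncard_insert_of_notMem (by
      simp only [Set.mem_insert_iff, Set.mem_singleton_iff, Prod.mk.injEq, not_or]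
      exact ⟨fun h => n12 h.2, fun h => n13 h.2, fun h => n14 h.2⟩),
    Set.ncard_insert_of_notMem (by
      simp only [Set.mem_insert_iff, Set.mem_singleton_iff, Prod.mk.injEq, not_or]
      exact ⟨fun h => n23 h.2, fun h => n24 h.2⟩),
    Set.ncard_pair (by
      intro h
      exact n34 (congrArg Prod.snd h))]
end
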